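/- Let P be a nonempty compact convex subset of ℝⁿ, f, g : ℝⁿ → ℝ convex and differentiable, F = f + g, with curvature-type constant C_F ≥ 0 as above. Let x⋆ ∈ P minimize F over P. Let (x_k) be generated by the generalized conditional gradient algorithm with exact line search: x_0 ∈ P, s_k minimizes u ↦ ⟨∇f(x_k), u⟩ + g(u) over P, α_k ∈ [0,1] minimizes α ↦ F(x_k + α(s_k − x_k)) over [0,1], and x_{k+1} = x_k + α_k(s_k − x_k). Then for each k ≥ 1, F(x_k) − F(x⋆) ≤ 2C_F/(k+2). -/

import Mathlib

open RealInnerProductSpace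

lemma aux_grad_inner {E : Type*} [NormedAddCommGroup E] [InnerProductSpace ℝ E]
    [CompleteSpace E] {f : E → ℝ} (hf : Differentiable ℝ f) (x v : E) :
    ⟪gradient f x, v⟫ = fderiv ℝ f x v := by
  have h := (hf x).hasGradientAt.hasFDerivAt
  rw [h.fderiv]
  exact (InnerProductSpace.toDual_apply_apply).symm

lemma aux_convex_grad {E : Type*} [NormedAddCommGroup E] [InnerProductSpace ℝ E]
    {f : E → ℝ} (hconv : ConvexOn ℝ Set.univ f) (hf : Differentiable ℝ f) (x y : E) :
    fderiv ℝ f x (y - x) ≤ f y - f x := by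
  set v := y - x
  have hcurve : HasDerivAt (fun t : ℝ => x + t • v) v 0 := by
    simpa using ((hasDerivAt_id (0:ℝ)).smul_const v).const_add x
  have hφ : HasDerivAt (fun t : ℝ => f (x + t • v)) (fderiv ℝ f x v) 0 := by
    have hL : HasFDerivAt f (fderiv ℝ f x) (x + (0:ℝ) • v) := by simpa using (hf x).hasFDerivAt
    have := hL.comp_hasDerivAt 0 hcurve
    exact this
  have hslope := hasDerivAt_iff_tendsto_slope.1 hφ
  have hle : ∀ t ∈ Set.Ioo (0:ℝ) 1, slope (fun t : ℝ => f (x + t • v)) 0 t ≤ f y - f x := by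
    intro t ht
    have hconvx := hconv.2 (Set.mem_univ x) (Set.mem_univ y)
      (by linarith [ht.2] : (0:ℝ) ≤ 1 - t) (le_of_lt ht.1) (by ring)
    have hxeq : (1 - t) • x + t • y = x + t • v := by simp [v]; module
    rw [hxeq] at hconvx
    rw [slope_def_field]
    have : (f (x + t • v) - f (x + (0:ℝ) • v)) / (t - 0) ≤ f y - f x := by
      rw [div_le_iff₀ (by linarith [ht.1])]
      simp only [zero_smul, add_zero, sub_zero]
      simp only [smul_eq_mul] at hconvx
      nlinarith [hconvx]
    simpa [div_sub_div_same, slope] using this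
  have htend : Filter.Tendsto (slope (fun t : ℝ => f (x + t • v)) 0) (nhdsWithin 0 (Set.Ioi 0))
      (nhds (fderiv ℝ f x v)) :=
    hslope.mono_left (nhdsWithin_mono _ (fun t ht => by simpa using ne_of_gt ht))
  refine le_of_tendsto htend ?_
  filter_upwards [Ioo_mem_nhdsGT_of_mem (by norm_num : (0:ℝ) ∈ Set.Ico (0:ℝ) 1)] with t ht
  exact hle t ht

/-- rate with exact line search: the generalized conditional gradient iterates
with exact line search satisfy `F x_k - F x⋆ ≤ 2 C_F/(k+2)` for all `k ≥ 1`. -/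
theorem stmt_13 (n : ℕ) (P : Set (EuclideanSpace ℝ (Fin n)))
    (hPne : P.Nonempty) (hPcpt : IsCompact P) (hPconv : Convex ℝ P)
    (f g : EuclideanSpace ℝ (Fin n) → ℝ)
    (hfconv : ConvexOn ℝ Set.univ f) (hgconv : ConvexOn ℝ Set.univ g)
    (hfdiff : Differentiable ℝ f) (hgdiff : Differentiable ℝ g)
    (CF : ℝ) (hCF : 0 ≤ CF)
    (hcurv : ∀ x ∈ P, ∀ y ∈ P, ∀ α ∈ Set.Icc (0 : ℝ) 1,
      f ((1 - α) • x + α • y) + g ((1 - α) • x + α • y) ≤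
        f x + g x + α * ⟪gradient (fun z => f z + g z) x, y - x⟫ + CF / 2 * α ^ 2)
    (xstar : EuclideanSpace ℝ (Fin n)) (hxstar : xstar ∈ P)
    (hmin : IsMinOn (fun x => f x + g x) P xstar)
    (x s : ℕ → EuclideanSpace ℝ (Fin n)) (α : ℕ → ℝ) (hx0 : x 0 ∈ P)
    (hsP : ∀ k, s k ∈ P)
    (hsmin : ∀ k, IsMinOn (fun u => ⟪gradient f (x k), u⟫ + g u) P (s k))
    (hαmem : ∀ k, α k ∈ Set.Icc (0 : ℝ) 1)
    (hαmin : ∀ k, IsMinOn (fun a : ℝ => f (x k + a • (s k - x k)) + g (x k + a • (s k - x k)))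
      (Set.Icc (0 : ℝ) 1) (α k))
    (hstep : ∀ k : ℕ, x (k + 1) = x k + α k • (s k - x k)) :
    ∀ k : ℕ, 1 ≤ k →
      (f (x k) + g (x k)) - (f xstar + g xstar) ≤ 2 * CF / ((k : ℝ) + 2) := by
  have hFdiff : Differentiable ℝ (fun z => f z + g z) := hfdiff.add hgdiff
  -- gradient of sum splits
  have hinnerF : ∀ (z v : EuclideanSpace ℝ (Fin n)),
      ⟪gradient (fun z => f z + g z) z, v⟫ = ⟪gradient f z, v⟫ + ⟪gradient g z, v⟫ := by
    intro z v
    rw [aux_grad_inner hFdiff, aux_grad_inner hfdiff, aux_grad_inner hgdiff,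
      fderiv_fun_add (hfdiff z) (hgdiff z)]
    simp
  -- iterates stay in P
  have hxP : ∀ k, x k ∈ P := by
    intro k
    induction k with
    | zero => exact hx0
    | succ m ih =>
      rw [hstep m]
      have hm := hαmem m
      have := hPconv ih (hsP m) (by linarith [hm.2] : (0:ℝ) ≤ 1 - α m) hm.1 (by ring)
      convert this using 1
      module
  have hnonneg : ∀ k, 0 ≤ (f (x k) + g (x k)) - (f xstar + g xstar) := fun k => by
    have := hmin (hxP k); simp at this; linarith
  -- gap bound
  have hgap : ∀ k, ⟪gradient (fun z => f z + g z) (x k), s k - x k⟫ ≤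
      (f xstar + g xstar) - (f (x k) + g (x k)) := by
    intro k
    rw [hinnerF]
    have h1 : ⟪gradient g (x k), s k - x k⟫ ≤ g (s k) - g (x k) := by
      rw [aux_grad_inner hgdiff]
      exact aux_convex_grad hgconv hgdiff (x k) (s k)
    have h2 : ⟪gradient f (x k), s k⟫ + g (s k) ≤ ⟪gradient f (x k), xstar⟫ + g xstar :=
      hsmin k hxstar
    have h3 : ⟪gradient f (x k), xstar - x k⟫ ≤ f xstar - f (x k) := by
      rw [aux_grad_inner hfdiff]
      exact aux_convex_grad hfconv hfdiff (x k) xstar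
    rw [inner_sub_right] at h3 ⊢
    linarith
  -- per-step decrease
  have hstepineq : ∀ k, ∀ a ∈ Set.Icc (0:ℝ) 1,
      (f (x (k+1)) + g (x (k+1))) - (f xstar + g xstar) ≤
        (1 - a) * ((f (x k) + g (x k)) - (f xstar + g xstar)) + CF / 2 * a ^ 2 := by
    intro k a ha
    have hls := hαmin k ha
    simp only at hls
    have heq : x k + a • (s k - x k) = (1 - a) • x k + a • s k := by module
    have hc := hcurv (x k) (hxP k) (s k) (hsP k) a ha
    have hmul := mul_le_mul_of_nonneg_left (hgap k) ha.1
    have hx1 : f (x (k+1)) + g (x (k+1)) ≤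
        f ((1 - a) • x k + a • s k) + g ((1 - a) • x k + a • s k) := by
      rw [hstep k, ← heq]
      exact hls
    nlinarith [hx1, hc, hmul]
  -- main induction
  intro k hk
  induction k with
  | zero => omega
  | succ m ih =>
    rcases Nat.eq_zero_or_pos m with hm | hm
    · subst hm
      have h1 := hstepineq 0 1 (by norm_num)
      norm_num at h1 ⊢
      linarith
    · have ihm := ih hm
      have hm2 : (2:ℝ) ≤ (m:ℝ) + 2 := by
        have := Nat.cast_nonneg (α := ℝ) m; linarith
      set K : ℝ := (m:ℝ) + 2 with hK
      have hKpos : 0 < K := by linarith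
      have hamem : (2/K) ∈ Set.Icc (0:ℝ) 1 := by
        constructor
        · positivity
        · rw [div_le_one hKpos]; linarith
      have hs := hstepineq m (2/K) hamem
      have h1a : (0:ℝ) ≤ 1 - 2/K := by
        have : 2/K ≤ 1 := hamem.2; linarith
      have hmono := mul_le_mul_of_nonneg_left ihm h1a
      have hfinal : (1 - 2/K) * (2 * CF / K) + CF / 2 * (2/K)^2 ≤ 2 * CF / (K + 1) := by
        have hexp : (1 - 2/K) * (2 * CF / K) + CF / 2 * (2/K)^2 = 2 * CF * (K - 1) / K^2 := by
          field_simp; ring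
        rw [hexp, div_le_div_iff₀ (by positivity) (by linarith : (0:ℝ) < K + 1)]
        nlinarith [hCF]
      calc (f (x (m+1)) + g (x (m+1))) - (f xstar + g xstar)
          ≤ (1 - 2/K) * ((f (x m) + g (x m)) - (f xstar + g xstar)) + CF / 2 * (2/K)^2 := hs
        _ ≤ (1 - 2/K) * (2 * CF / K) + CF / 2 * (2/K)^2 := by linarith
        _ ≤ 2 * CF / (K + 1) := hfinal
        _ = 2 * CF / (((m+1:ℕ):ℝ) + 2) := by push_cast [hK]; ring
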